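/- Reduction of the simulated Darwinism state: in ℂ² ⊗ (ℂ²)^{⊗N}, let |Ψ⟩ = α |0⟩ ⊗ |0⟩^{⊗N} + β |1⟩ ⊗ (⊗_{i=1}^N |θ_i⟩), where |θ_i⟩ = cos(θ_i/2)|0⟩ + sin(θ_i/2)|1⟩ and |α|² + |β|² = 1. Then for every n with 1 ≤ n ≤ N−1, tracing out the first n environment qubits gives tr_{1,…,n} |Ψ⟩⟨Ψ| = |α|² |0⟩⟨0| ⊗ ⊗_{i=n+1}^N |0⟩⟨0| + |β|² |1⟩⟨1| ⊗ ⊗_{i=n+1}^N |θ_i⟩⟨θ_i| + (α β̄ ∏_{i=1}^n cos(θ_i/2)) |0⟩⟨1| ⊗ ⊗_{i=n+1}^N |0⟩⟨θ_i| + (ᾱ β ∏_{i=1}^n cos(θ_i/2)) |1⟩⟨0| ⊗ ⊗_{i=n+1}^N |θ_i⟩⟨0|. In particular, if θ_i = π for all i, the coherent cross terms vanish and the remaining environmental states |0⟩ and |θ_i⟩ are orthogonal, so the reduction is a Spectrum Broadcast Structure. -/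

import Mathlib

open scoped Kronecker Matrix ComplexOrder BigOperators
open Matrix

noncomputable section

/-- The rank-one operator `|v⟩⟨w| = v wᴴ`. -/
def ketBra {n : Type*} (v w : n → ℂ) : Matrix n n ℂ := Matrix.vecMulVec v (star w)

/-- A density matrix: positive semidefinite with unit trace. -/
def IsDensityMatrix {n : Type*} [Fintype n] (ρ : Matrix n n ℂ) : Prop :=
  ρ.PosSemidef ∧ ρ.trace = 1

/-- An orthonormal family of vectors. -/
def OrthonormalFamily {n I : Type*} [Fintype n] [DecidableEq I] (e : I → n → ℂ) : Prop :=
  ∀ i j, star (e i) ⬝ᵥ e j = (if i = j then 1 else 0)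

/-- The basis vector `|0⟩` of a qubit. -/
def ket0 : Fin 2 → ℂ := fun i => if i = 0 then 1 else 0

/-- The basis vector `|1⟩` of a qubit. -/
def ket1 : Fin 2 → ℂ := fun i => if i = 1 then 1 else 0

/-- The qubit state `|θ⟩ = cos(θ/2)|0⟩ + sin(θ/2)|1⟩`. -/
def ketTheta (t : ℝ) : Fin 2 → ℂ :=
  fun i => if i = 0 then (Real.cos (t / 2) : ℂ) else (Real.sin (t / 2) : ℂ)

/-- The simulated Darwinism state
`|Ψ⟩ = α|0⟩ ⊗ |0⟩^{⊗N} + β|1⟩ ⊗ (⊗ᵢ |θᵢ⟩)`. -/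
def psiState (N : ℕ) (α β : ℂ) (θ : Fin N → ℝ) :
    (Fin 2 × ((l : Fin N) → Fin 2)) → ℂ :=
  fun p => α * ket0 p.1 * ∏ i, ket0 (p.2 i) + β * ket1 p.1 * ∏ i, ketTheta (θ i) (p.2 i)

/-- Partial trace over the first `n` environment qubits. -/
def traceHead {N : ℕ} (n : ℕ) (hn : n ≤ N)
    (M : Matrix (Fin 2 × ((l : Fin N) → Fin 2)) (Fin 2 × ((l : Fin N) → Fin 2)) ℂ) :
    Matrix (Fin 2 × ((l : Fin (N - n)) → Fin 2)) (Fin 2 × ((l : Fin (N - n)) → Fin 2)) ℂ :=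
  fun p q => ∑ c : Fin n → Fin 2,
    M (p.1, fun k => if h : (k : ℕ) < n then c ⟨k, h⟩
        else p.2 ⟨(k : ℕ) - n, by have := k.isLt; omega⟩)
      (q.1, fun k => if h : (k : ℕ) < n then c ⟨k, h⟩
        else q.2 ⟨(k : ℕ) - n, by have := k.isLt; omega⟩)


section Aux

lemma prod_split_aux {N n : ℕ} (hn : n ≤ N) (F : Fin N → Fin 2 → ℂ)
    (c : Fin n → Fin 2) (b : Fin (N - n) → Fin 2) :
    (∏ i : Fin N, F i (if h : (i : ℕ) < n then c ⟨i, h⟩ else b ⟨(i : ℕ) - n, by omega⟩)) =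
      (∏ k : Fin n, F ⟨k, by omega⟩ (c k)) *
        ∏ j : Fin (N - n), F ⟨n + (j : ℕ), by omega⟩ (b j) := by
  classical
  set g : ℕ → ℂ := fun m =>
    if h : m < N then
      F ⟨m, h⟩ (if h' : m < n then c ⟨m, h'⟩ else b ⟨m - n, by omega⟩)
    else 1 with hg
  have hNn : n + (N - n) = N := by omega
  have h1 : (∏ i : Fin N, F i (if h : (i : ℕ) < n then c ⟨i, h⟩
      else b ⟨(i : ℕ) - n, by omega⟩)) = ∏ m ∈ Finset.range N, g m := by
    rw [← Fin.prod_univ_eq_prod_range]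
    apply Finset.prod_congr rfl
    intro i _
    simp only [hg, dif_pos i.isLt]
  have h2 : ∏ m ∈ Finset.range N, g m =
      (∏ m ∈ Finset.range n, g m) * ∏ m ∈ Finset.range (N - n), g (n + m) := by
    have := Finset.prod_range_add g n (N - n)
    rw [hNn] at this
    exact this
  have h3 : ∏ m ∈ Finset.range n, g m = ∏ k : Fin n, F ⟨k, by omega⟩ (c k) := by
    rw [← Fin.prod_univ_eq_prod_range (fun m => g m) n]
    apply Finset.prod_congr rfl
    intro k _
    have hk : (k : ℕ) < N := by omega
    simp only [hg]
    rw [dif_pos hk, dif_pos k.isLt]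
  have h4 : ∏ m ∈ Finset.range (N - n), g (n + m) =
      ∏ j : Fin (N - n), F ⟨n + (j : ℕ), by omega⟩ (b j) := by
    rw [← Fin.prod_univ_eq_prod_range (fun m => g (n + m))]
    apply Finset.prod_congr rfl
    intro j _
    have hj : n + (j : ℕ) < N := by omega
    simp only [hg]
    rw [dif_pos hj, dif_neg (by omega : ¬ n + (j : ℕ) < n)]
    have hb : (⟨n + (j : ℕ) - n, by omega⟩ : Fin (N - n)) = j := by
      apply Fin.ext; simp
    rw [hb]
  rw [h1, h2, h3, h4]

lemma sum_mul_star_aux (n : ℕ) (u v : Fin n → Fin 2 → ℂ) :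
    ∑ c : Fin n → Fin 2, (∏ k, u k (c k)) * star (∏ k, v k (c k)) =
      ∏ k, ∑ m, u k m * star (v k m) := by
  rw [Fintype.prod_sum]
  apply Finset.sum_congr rfl
  intro c _
  rw [star_prod, ← Finset.prod_mul_distrib]

lemma sum00_aux : ∑ m : Fin 2, ket0 m * star (ket0 m) = 1 := by
  rw [Fin.sum_univ_two]
  show (1 : ℂ) * star (1 : ℂ) + 0 * star (0 : ℂ) = 1
  simp

lemma sum0t_aux (t : ℝ) : ∑ m : Fin 2, ket0 m * star (ketTheta t m) =
    (Real.cos (t / 2) : ℂ) := by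
  rw [Fin.sum_univ_two]
  show (1 : ℂ) * star ((Real.cos (t / 2) : ℂ)) + 0 * star ((Real.sin (t / 2) : ℂ)) =
    (Real.cos (t / 2) : ℂ)
  simp only [Complex.star_def, Complex.conj_ofReal]
  ring

lemma sumt0_aux (t : ℝ) : ∑ m : Fin 2, ketTheta t m * star (ket0 m) =
    (Real.cos (t / 2) : ℂ) := by
  rw [Fin.sum_univ_two]
  show ((Real.cos (t / 2) : ℂ)) * star (1 : ℂ) + ((Real.sin (t / 2) : ℂ)) * star (0 : ℂ) =
    (Real.cos (t / 2) : ℂ)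
  simp

lemma sumtt_aux (t : ℝ) : ∑ m : Fin 2, ketTheta t m * star (ketTheta t m) = 1 := by
  rw [Fin.sum_univ_two]
  show ((Real.cos (t / 2) : ℂ)) * star ((Real.cos (t / 2) : ℂ)) +
    ((Real.sin (t / 2) : ℂ)) * star ((Real.sin (t / 2) : ℂ)) = 1
  simp only [Complex.star_def, Complex.conj_ofReal]
  norm_cast
  nlinarith [Real.sin_sq_add_cos_sq (t / 2)]

end Aux

/-- Reduction of the simulated Darwinism state: tracing out the first `n` environment
qubits leaves the displayed combination of diagonal and cross terms; if all `θᵢ = π`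
the cross terms vanish and the remaining environmental states are orthogonal, so the
reduction is a Spectrum Broadcast Structure. -/
theorem stmt_19 (N n : ℕ) (h1 : 1 ≤ n) (h2 : n ≤ N - 1) (hN : 1 ≤ N)
    (α β : ℂ) (hnorm : ‖α‖ ^ 2 + ‖β‖ ^ 2 = 1)
    (θ : Fin N → ℝ) :
    traceHead n (by omega) (ketBra (psiState N α β θ) (psiState N α β θ)) =
      (α * star α) • (ketBra ket0 ket0 ⊗ₖ
        ketBra (fun b : (l : Fin (N - n)) → Fin 2 => ∏ j, ket0 (b j))
               (fun b : (l : Fin (N - n)) → Fin 2 => ∏ j, ket0 (b j))) +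
      (β * star β) • (ketBra ket1 ket1 ⊗ₖ
        ketBra (fun b : (l : Fin (N - n)) → Fin 2 =>
                  ∏ j : Fin (N - n), ketTheta (θ ⟨n + (j : ℕ), by have := j.isLt; omega⟩) (b j))
               (fun b : (l : Fin (N - n)) → Fin 2 =>
                  ∏ j : Fin (N - n), ketTheta (θ ⟨n + (j : ℕ), by have := j.isLt; omega⟩) (b j))) +
      (α * star β * ∏ i : Fin n, (Real.cos (θ ⟨i, by have := i.isLt; omega⟩ / 2) : ℂ)) •
        (ketBra ket0 ket1 ⊗ₖ
          ketBra (fun b : (l : Fin (N - n)) → Fin 2 => ∏ j, ket0 (b j))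
                 (fun b : (l : Fin (N - n)) → Fin 2 =>
                    ∏ j : Fin (N - n), ketTheta (θ ⟨n + (j : ℕ), by have := j.isLt; omega⟩) (b j))) +
      (star α * β * ∏ i : Fin n, (Real.cos (θ ⟨i, by have := i.isLt; omega⟩ / 2) : ℂ)) •
        (ketBra ket1 ket0 ⊗ₖ
          ketBra (fun b : (l : Fin (N - n)) → Fin 2 =>
                    ∏ j : Fin (N - n), ketTheta (θ ⟨n + (j : ℕ), by have := j.isLt; omega⟩) (b j))
                 (fun b : (l : Fin (N - n)) → Fin 2 => ∏ j, ket0 (b j))) ∧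
    ((∀ i, θ i = Real.pi) →
      (traceHead n (by omega) (ketBra (psiState N α β θ) (psiState N α β θ)) =
        (α * star α) • (ketBra ket0 ket0 ⊗ₖ
          ketBra (fun b : (l : Fin (N - n)) → Fin 2 => ∏ j, ket0 (b j))
                 (fun b : (l : Fin (N - n)) → Fin 2 => ∏ j, ket0 (b j))) +
        (β * star β) • (ketBra ket1 ket1 ⊗ₖ
          ketBra (fun b : (l : Fin (N - n)) → Fin 2 =>
                    ∏ j : Fin (N - n), ketTheta (θ ⟨n + (j : ℕ), by have := j.isLt; omega⟩) (b j))
                 (fun b : (l : Fin (N - n)) → Fin 2 =>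
                    ∏ j : Fin (N - n), ketTheta (θ ⟨n + (j : ℕ), by have := j.isLt; omega⟩) (b j)))) ∧
      ∀ i, star ket0 ⬝ᵥ ketTheta (θ i) = 0) := by

  have hn' : n ≤ N := by omega
  have main : traceHead n (by omega) (ketBra (psiState N α β θ) (psiState N α β θ)) =
      (α * star α) • (ketBra ket0 ket0 ⊗ₖ
        ketBra (fun b : (l : Fin (N - n)) → Fin 2 => ∏ j, ket0 (b j))
               (fun b : (l : Fin (N - n)) → Fin 2 => ∏ j, ket0 (b j))) +
      (β * star β) • (ketBra ket1 ket1 ⊗ₖ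
        ketBra (fun b : (l : Fin (N - n)) → Fin 2 =>
                  ∏ j : Fin (N - n), ketTheta (θ ⟨n + (j : ℕ), by have := j.isLt; omega⟩) (b j))
               (fun b : (l : Fin (N - n)) → Fin 2 =>
                  ∏ j : Fin (N - n), ketTheta (θ ⟨n + (j : ℕ), by have := j.isLt; omega⟩) (b j))) +
      (α * star β * ∏ i : Fin n, (Real.cos (θ ⟨i, by have := i.isLt; omega⟩ / 2) : ℂ)) •
        (ketBra ket0 ket1 ⊗ₖ
          ketBra (fun b : (l : Fin (N - n)) → Fin 2 => ∏ j, ket0 (b j))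
                 (fun b : (l : Fin (N - n)) → Fin 2 =>
                    ∏ j : Fin (N - n), ketTheta (θ ⟨n + (j : ℕ), by have := j.isLt; omega⟩) (b j))) +
      (star α * β * ∏ i : Fin n, (Real.cos (θ ⟨i, by have := i.isLt; omega⟩ / 2) : ℂ)) •
        (ketBra ket1 ket0 ⊗ₖ
          ketBra (fun b : (l : Fin (N - n)) → Fin 2 =>
                    ∏ j : Fin (N - n), ketTheta (θ ⟨n + (j : ℕ), by have := j.isLt; omega⟩) (b j))
                 (fun b : (l : Fin (N - n)) → Fin 2 => ∏ j, ket0 (b j))) := by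
    ext ⟨p1, p2⟩ ⟨q1, q2⟩
    have hsum : ∀ c : Fin n → Fin 2,
        (psiState N α β θ
            (p1, fun k : Fin N => if h : (k : ℕ) < n then c ⟨k, h⟩
              else p2 ⟨(k : ℕ) - n, by have := k.isLt; omega⟩)) *
          star (psiState N α β θ
            (q1, fun k : Fin N => if h : (k : ℕ) < n then c ⟨k, h⟩
              else q2 ⟨(k : ℕ) - n, by have := k.isLt; omega⟩)) =
        (α * ket0 p1 * (∏ j : Fin (N - n), ket0 (p2 j)) *
            star (α * ket0 q1 * (∏ j : Fin (N - n), ket0 (q2 j)))) *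
          ((∏ k : Fin n, ket0 (c k)) * star (∏ k : Fin n, ket0 (c k))) +
        (α * ket0 p1 * (∏ j : Fin (N - n), ket0 (p2 j)) *
            star (β * ket1 q1 *
              (∏ j : Fin (N - n), ketTheta (θ ⟨n + (j : ℕ), by have := j.isLt; omega⟩) (q2 j)))) *
          ((∏ k : Fin n, ket0 (c k)) *
            star (∏ k : Fin n, ketTheta (θ ⟨k, by have := k.isLt; omega⟩) (c k))) +
        (β * ket1 p1 *
            (∏ j : Fin (N - n), ketTheta (θ ⟨n + (j : ℕ), by have := j.isLt; omega⟩) (p2 j)) *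
            star (α * ket0 q1 * (∏ j : Fin (N - n), ket0 (q2 j)))) *
          ((∏ k : Fin n, ketTheta (θ ⟨k, by have := k.isLt; omega⟩) (c k)) *
            star (∏ k : Fin n, ket0 (c k))) +
        (β * ket1 p1 *
            (∏ j : Fin (N - n), ketTheta (θ ⟨n + (j : ℕ), by have := j.isLt; omega⟩) (p2 j)) *
            star (β * ket1 q1 *
              (∏ j : Fin (N - n), ketTheta (θ ⟨n + (j : ℕ), by have := j.isLt; omega⟩) (q2 j)))) *
          ((∏ k : Fin n, ketTheta (θ ⟨k, by have := k.isLt; omega⟩) (c k)) *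
            star (∏ k : Fin n, ketTheta (θ ⟨k, by have := k.isLt; omega⟩) (c k))) := by
      intro c
      simp only [psiState]
      rw [prod_split_aux hn' (fun _ => ket0) c p2,
          prod_split_aux hn' (fun i => ketTheta (θ i)) c p2,
          prod_split_aux hn' (fun _ => ket0) c q2,
          prod_split_aux hn' (fun i => ketTheta (θ i)) c q2]
      simp only [star_add, star_mul']
      ring
    show (∑ c : Fin n → Fin 2, (ketBra (psiState N α β θ) (psiState N α β θ))
        (p1, fun k : Fin N => if h : (k : ℕ) < n then c ⟨k, h⟩
          else p2 ⟨(k : ℕ) - n, by have := k.isLt; omega⟩)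
        (q1, fun k : Fin N => if h : (k : ℕ) < n then c ⟨k, h⟩
          else q2 ⟨(k : ℕ) - n, by have := k.isLt; omega⟩)) = _
    simp only [ketBra, vecMulVec_apply, Pi.star_apply]
    rw [Finset.sum_congr rfl (fun c _ => hsum c)]
    rw [Finset.sum_add_distrib, Finset.sum_add_distrib, Finset.sum_add_distrib,
        ← Finset.mul_sum, ← Finset.mul_sum, ← Finset.mul_sum, ← Finset.mul_sum,
        sum_mul_star_aux, sum_mul_star_aux, sum_mul_star_aux, sum_mul_star_aux]
    have e00 : (∏ k : Fin n, ∑ m : Fin 2, ket0 m * star (ket0 m)) = 1 := by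
      rw [Finset.prod_congr rfl (fun (k : Fin n) _ => sum00_aux), Finset.prod_const_one]
    have e0t : (∏ k : Fin n, ∑ m : Fin 2,
        ket0 m * star (ketTheta (θ ⟨k, by have := k.isLt; omega⟩) m)) =
        ∏ i : Fin n, (Real.cos (θ ⟨i, by have := i.isLt; omega⟩ / 2) : ℂ) :=
      Finset.prod_congr rfl (fun k _ => sum0t_aux _)
    have et0 : (∏ k : Fin n, ∑ m : Fin 2,
        ketTheta (θ ⟨k, by have := k.isLt; omega⟩) m * star (ket0 m)) =
        ∏ i : Fin n, (Real.cos (θ ⟨i, by have := i.isLt; omega⟩ / 2) : ℂ) :=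
      Finset.prod_congr rfl (fun k _ => sumt0_aux _)
    have ett : (∏ k : Fin n, ∑ m : Fin 2,
        ketTheta (θ ⟨k, by have := k.isLt; omega⟩) m *
          star (ketTheta (θ ⟨k, by have := k.isLt; omega⟩) m)) = 1 := by
      rw [Finset.prod_congr rfl (fun (k : Fin n) _ => sumtt_aux _), Finset.prod_const_one]
    rw [e00, e0t, et0, ett]
    simp only [Matrix.add_apply, Matrix.smul_apply, smul_eq_mul, kroneckerMap_apply,
      ketBra, vecMulVec_apply, Pi.star_apply, star_mul', star_prod]
    ring
  refine ⟨main, fun hpi => ?_⟩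
  have hP : (∏ i : Fin n, (Real.cos (θ ⟨i, by have := i.isLt; omega⟩ / 2) : ℂ)) = 0 := by
    apply Finset.prod_eq_zero (Finset.mem_univ (⟨0, by omega⟩ : Fin n))
    rw [hpi]
    simp [Real.cos_pi_div_two]
  constructor
  · rw [main, hP]
    simp
  · intro i
    rw [hpi i]
    show ∑ m : Fin 2, star (ket0 m) * ketTheta Real.pi m = 0
    rw [Fin.sum_univ_two]
    show star (1 : ℂ) * ((Real.cos (Real.pi / 2) : ℂ)) +
      star (0 : ℂ) * ((Real.sin (Real.pi / 2) : ℂ)) = 0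
    simp [Real.cos_pi_div_two]
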